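/- Let X be a real topological vector space, D ⊆ X a convex set, f : D → ℝ, and suppose f' : D → X* assigns to each u ∈ D a continuous linear functional such that for all u, v ∈ D, lim_{t→0⁺} (f(u + t(v−u)) − f(u))/t = f'(u)(v − u). Then: f is convex on D if and only if f' is monotone, i.e., (f'(u) − f'(v))(u − v) ≥ 0 for all u, v ∈ D; and f is strictly convex on D if and only if (f'(u) − f'(v))(u − v) > 0 for all u, v ∈ D with u ≠ v. -/

import Mathlib

open Filter Topology Set

set_option linter.unusedSectionVars false

section aux

variable {X : Type*} [AddCommGroup X] [Module ℝ X] [TopologicalSpace X]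
    [IsTopologicalAddGroup X] [ContinuousSMul ℝ X]
    {D : Set X} {f : X → ℝ} {f' : X → X →L[ℝ] ℝ}

private lemma path_eq (u v : X) {a b : ℝ} (hab : a + b = 1) :
    a • u + b • v = u + b • (v - u) := by
  have ha : a = 1 - b := by linarith
  subst ha
  module

private lemma path_mem (hD : Convex ℝ D) {u v : X} (hu : u ∈ D) (hv : v ∈ D)
    {t : ℝ} (ht : t ∈ Icc (0:ℝ) 1) : u + t • (v - u) ∈ D := by
  have h := hD hu hv (by linarith [ht.2] : (0:ℝ) ≤ 1 - t) ht.1 (by ring)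
  rwa [path_eq u v (by ring : (1 - t) + t = 1)] at h

private lemma hasDerivAt_path (hD : Convex ℝ D)
    (hf' : ∀ u ∈ D, ∀ v ∈ D,
      Tendsto (fun t : ℝ => (f (u + t • (v - u)) - f u) / t) (𝓝[>] 0)
        (𝓝 (f' u (v - u))))
    {u v : X} (hu : u ∈ D) (hv : v ∈ D) {t : ℝ} (ht : t ∈ Ioo (0:ℝ) 1) :
    HasDerivAt (fun s : ℝ => f (u + s • (v - u))) (f' (u + t • (v - u)) (v - u)) t := by
  set w := u + t • (v - u) with hw
  have hwD : w ∈ D := path_mem hD hu hv ⟨ht.1.le, ht.2.le⟩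
  have ht0 : (0:ℝ) < t := ht.1
  have h1t : (0:ℝ) < 1 - t := by linarith [ht.2]
  rw [hasDerivAt_iff_tendsto_slope, ← nhdsLT_sup_nhdsGT, tendsto_sup]
  constructor
  · -- left limit, direction u
    have key := hf' w hwD u hu
    have hval : f' w (u - w) = (-t) * f' w (v - u) := by
      have huw : u - w = (-t) • (v - u) := by rw [hw]; module
      rw [huw, map_smul, smul_eq_mul]
    rw [hval] at key
    have hsub : Tendsto (fun y : ℝ => (t - y) / t) (𝓝[<] t) (𝓝[>] 0) := by
      rw [tendsto_nhdsWithin_iff]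
      constructor
      · have h0 : Tendsto (fun y : ℝ => (t - y) / t) (𝓝 t) (𝓝 ((t - t) / t)) :=
          (tendsto_const_nhds.sub tendsto_id).div_const t
        simpa using h0.mono_left nhdsWithin_le_nhds
      · filter_upwards [self_mem_nhdsWithin] with y hy
        exact div_pos (by linarith [mem_Iio.mp hy]) ht0
    have comp := (key.comp hsub).div_const (-t)
    have hlim : (-t) * f' w (v - u) / (-t) = f' w (v - u) := by
      field_simp
    rw [hlim] at comp
    refine comp.congr' ?_
    filter_upwards [self_mem_nhdsWithin] with y hy
    have hyt : y < t := hy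
    set s : ℝ := (t - y) / t with hs
    have hst : s * t = t - y := div_mul_cancel₀ _ (ne_of_gt ht0)
    have hpt : w + s • (u - w) = u + y • (v - u) := by
      have huw : u - w = (-t) • (v - u) := by rw [hw]; module
      have : w + s • (u - w) = u + (t - s * t) • (v - u) := by
        rw [huw, hw]; module
      rw [this, hst]; ring_nf
    show (f (w + s • (u - w)) - f w) / s / (-t) = slope (fun s : ℝ => f (u + s • (v - u))) t y
    rw [hpt, slope_def_field]
    have hsne : s ≠ 0 := ne_of_gt (div_pos (by linarith) ht0)
    have hfw : f w = f (u + t • (v - u)) := by rw [hw]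
    rw [hfw, div_div, show s * -t = y - t by rw [mul_neg, hst]; ring]
  · -- right limit, direction v
    have key := hf' w hwD v hv
    have hval : f' w (v - w) = (1 - t) * f' w (v - u) := by
      have hvw : v - w = (1 - t) • (v - u) := by rw [hw]; module
      rw [hvw, map_smul, smul_eq_mul]
    rw [hval] at key
    have hsub : Tendsto (fun y : ℝ => (y - t) / (1 - t)) (𝓝[>] t) (𝓝[>] 0) := by
      rw [tendsto_nhdsWithin_iff]
      constructor
      · have h0 : Tendsto (fun y : ℝ => (y - t) / (1 - t)) (𝓝 t) (𝓝 ((t - t) / (1 - t))) :=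
          (tendsto_id.sub tendsto_const_nhds).div_const (1 - t)
        simpa using h0.mono_left nhdsWithin_le_nhds
      · filter_upwards [self_mem_nhdsWithin] with y hy
        exact div_pos (by linarith [mem_Ioi.mp hy]) h1t
    have comp := (key.comp hsub).div_const (1 - t)
    have hlim : (1 - t) * f' w (v - u) / (1 - t) = f' w (v - u) := by
      field_simp
    rw [hlim] at comp
    refine comp.congr' ?_
    filter_upwards [self_mem_nhdsWithin] with y hy
    have hyt : t < y := hy
    set s : ℝ := (y - t) / (1 - t) with hs
    have hst : s * (1 - t) = y - t := div_mul_cancel₀ _ (ne_of_gt h1t)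
    have hpt : w + s • (v - w) = u + y • (v - u) := by
      have hvw : v - w = (1 - t) • (v - u) := by rw [hw]; module
      have : w + s • (v - w) = u + (t + s * (1 - t)) • (v - u) := by
        rw [hvw, hw]; module
      rw [this, hst]; ring_nf
    show (f (w + s • (v - w)) - f w) / s / (1 - t) = slope (fun s : ℝ => f (u + s • (v - u))) t y
    rw [hpt, slope_def_field]
    have hsne : s ≠ 0 := ne_of_gt (div_pos (by linarith) h1t)
    have hfw : f w = f (u + t • (v - u)) := by rw [hw]
    rw [hfw, div_div, hst]

private lemma contWithin_zero
    (hf' : ∀ u ∈ D, ∀ v ∈ D,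
      Tendsto (fun t : ℝ => (f (u + t • (v - u)) - f u) / t) (𝓝[>] 0)
        (𝓝 (f' u (v - u))))
    {u v : X} (hu : u ∈ D) (hv : v ∈ D) :
    ContinuousWithinAt (fun s : ℝ => f (u + s • (v - u))) (Ici 0) 0 := by
  rw [← continuousWithinAt_Ioi_iff_Ici]
  have key := hf' u hu v hv
  have h2 : Tendsto (fun t : ℝ => (f (u + t • (v - u)) - f u) / t * t + f u) (𝓝[>] 0)
      (𝓝 (f' u (v - u) * 0 + f u)) :=
    (key.mul (tendsto_id.mono_left nhdsWithin_le_nhds)).add tendsto_const_nhds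
  rw [mul_zero, zero_add] at h2
  have h3 : Tendsto (fun s : ℝ => f (u + s • (v - u))) (𝓝[>] 0) (𝓝 (f u)) := by
    refine h2.congr' ?_
    filter_upwards [self_mem_nhdsWithin] with t ht
    rw [div_mul_cancel₀ _ (ne_of_gt (mem_Ioi.mp ht))]
    ring
  unfold ContinuousWithinAt
  simpa using h3

private lemma contOn_path (hD : Convex ℝ D)
    (hf' : ∀ u ∈ D, ∀ v ∈ D,
      Tendsto (fun t : ℝ => (f (u + t • (v - u)) - f u) / t) (𝓝[>] 0)
        (𝓝 (f' u (v - u))))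
    {u v : X} (hu : u ∈ D) (hv : v ∈ D) :
    ContinuousOn (fun s : ℝ => f (u + s • (v - u))) (Icc 0 1) := by
  intro t ht
  rcases eq_or_lt_of_le ht.1 with h0 | h0
  · rw [← h0]
    exact (contWithin_zero hf' hu hv).mono Icc_subset_Ici_self
  rcases eq_or_lt_of_le ht.2 with h1 | h1
  · subst h1
    have hrw : (fun s : ℝ => f (u + s • (v - u))) =
        (fun s : ℝ => f (v + s • (u - v))) ∘ (fun y : ℝ => 1 - y) := by
      funext y
      show f (u + y • (v - u)) = f (v + (1 - y) • (u - v))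
      rw [show u + y • (v - u) = v + (1 - y) • (u - v) by module]
    rw [hrw]
    refine ContinuousWithinAt.comp (t := Ici 0) ?_ ?_ ?_
    · show ContinuousWithinAt _ (Ici 0) (1 - 1)
      rw [sub_self]
      exact contWithin_zero hf' hv hu
    · exact (continuous_const.sub continuous_id).continuousWithinAt
    · intro y hy
      simp only [mem_Ici]
      linarith [hy.2]
  · exact ((hasDerivAt_path hD hf' hu hv ⟨h0, h1⟩).continuousAt).continuousWithinAt

private lemma deriv_mono_aux (hD : Convex ℝ D)
    (hf' : ∀ u ∈ D, ∀ v ∈ D,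
      Tendsto (fun t : ℝ => (f (u + t • (v - u)) - f u) / t) (𝓝[>] 0)
        (𝓝 (f' u (v - u))))
    {x y : X} (hx : x ∈ D) (hy : y ∈ D) {s t : ℝ}
    (hs : s ∈ Ioo (0:ℝ) 1) (ht : t ∈ Ioo (0:ℝ) 1) (hst : s < t)
    (hm : 0 ≤ (f' (x + t • (y - x)) - f' (x + s • (y - x))) ((x + t • (y - x)) - (x + s • (y - x)))) :
    deriv (fun r : ℝ => f (x + r • (y - x))) s ≤ deriv (fun r : ℝ => f (x + r • (y - x))) t := by
  rw [(hasDerivAt_path hD hf' hx hy hs).deriv, (hasDerivAt_path hD hf' hx hy ht).deriv]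
  have hxx : (x + t • (y - x)) - (x + s • (y - x)) = (t - s) • (y - x) := by module
  rw [hxx, map_smul, smul_eq_mul, ContinuousLinearMap.sub_apply] at hm
  nlinarith [hm]

private lemma convexOn_of_mono (hD : Convex ℝ D)
    (hf' : ∀ u ∈ D, ∀ v ∈ D,
      Tendsto (fun t : ℝ => (f (u + t • (v - u)) - f u) / t) (𝓝[>] 0)
        (𝓝 (f' u (v - u))))
    (hmono : ∀ u ∈ D, ∀ v ∈ D, 0 ≤ (f' u - f' v) (u - v)) :
    ConvexOn ℝ D f := by
  refine ⟨hD, ?_⟩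
  intro x hx y hy a b ha hb hab
  set φ := fun r : ℝ => f (x + r • (y - x)) with hφ
  have hφc : ConvexOn ℝ (Icc (0:ℝ) 1) φ := by
    refine MonotoneOn.convexOn_of_deriv (convex_Icc 0 1) (contOn_path hD hf' hx hy) ?_ ?_
    · rw [interior_Icc]
      exact fun t htm =>
        ((hasDerivAt_path hD hf' hx hy htm).differentiableAt).differentiableWithinAt
    · rw [interior_Icc]
      intro s hs t ht hst
      rcases eq_or_lt_of_le hst with h | h
      · rw [h]
      · exact deriv_mono_aux hD hf' hx hy hs ht h
          (hmono _ (path_mem hD hx hy ⟨ht.1.le, ht.2.le⟩) _ (path_mem hD hx hy ⟨hs.1.le, hs.2.le⟩))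
  have h01 : (0:ℝ) ∈ Icc (0:ℝ) 1 := left_mem_Icc.mpr zero_le_one
  have h11 : (1:ℝ) ∈ Icc (0:ℝ) 1 := right_mem_Icc.mpr zero_le_one
  have := hφc.2 h01 h11 ha hb hab
  simp only [smul_eq_mul, mul_zero, mul_one, zero_add] at this
  rw [hφ] at this
  simp only [zero_smul, add_zero, one_smul, add_sub_cancel] at this
  rwa [path_eq x y hab]

private lemma strictConvexOn_of_strictMono (hD : Convex ℝ D)
    (hf' : ∀ u ∈ D, ∀ v ∈ D,
      Tendsto (fun t : ℝ => (f (u + t • (v - u)) - f u) / t) (𝓝[>] 0)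
        (𝓝 (f' u (v - u))))
    (hmono : ∀ u ∈ D, ∀ v ∈ D, u ≠ v → 0 < (f' u - f' v) (u - v)) :
    StrictConvexOn ℝ D f := by
  refine ⟨hD, ?_⟩
  intro x hx y hy hxy a b ha hb hab
  set φ := fun r : ℝ => f (x + r • (y - x)) with hφ
  have hφc : StrictConvexOn ℝ (Icc (0:ℝ) 1) φ := by
    refine StrictMonoOn.strictConvexOn_of_deriv (convex_Icc 0 1) (contOn_path hD hf' hx hy) ?_
    rw [interior_Icc]
    intro s hs t ht hst
    have hne : x + t • (y - x) ≠ x + s • (y - x) := by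
      intro hcontra
      have : (t - s) • (y - x) = 0 := by
        have := sub_eq_zero.mpr hcontra
        rw [show (x + t • (y - x)) - (x + s • (y - x)) = (t - s) • (y - x) by module] at this
        exact this
      rcases smul_eq_zero.mp this with h | h
      · exact (ne_of_gt (sub_pos.mpr hst)) h
      · exact hxy (by rw [sub_eq_zero] at h; rw [h])
    have hm := hmono _ (path_mem hD hx hy ⟨ht.1.le, ht.2.le⟩)
      _ (path_mem hD hx hy ⟨hs.1.le, hs.2.le⟩) hne
    rw [(hasDerivAt_path hD hf' hx hy hs).deriv, (hasDerivAt_path hD hf' hx hy ht).deriv]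
    rw [show (x + t • (y - x)) - (x + s • (y - x)) = (t - s) • (y - x) by module,
      map_smul, smul_eq_mul, ContinuousLinearMap.sub_apply] at hm
    nlinarith [hm]
  have h01 : (0:ℝ) ∈ Icc (0:ℝ) 1 := left_mem_Icc.mpr zero_le_one
  have h11 : (1:ℝ) ∈ Icc (0:ℝ) 1 := right_mem_Icc.mpr zero_le_one
  have := hφc.2 h01 h11 (by norm_num : (0:ℝ) ≠ 1) ha hb hab
  simp only [smul_eq_mul, mul_zero, mul_one, zero_add] at this
  rw [hφ] at this
  simp only [zero_smul, add_zero, one_smul, add_sub_cancel] at this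
  rwa [path_eq x y hab]

private lemma grad_le
    (hf' : ∀ u ∈ D, ∀ v ∈ D,
      Tendsto (fun t : ℝ => (f (u + t • (v - u)) - f u) / t) (𝓝[>] 0)
        (𝓝 (f' u (v - u))))
    (hconv : ConvexOn ℝ D f) {u v : X} (hu : u ∈ D) (hv : v ∈ D) :
    f' u (v - u) ≤ f v - f u := by
  refine le_of_tendsto (hf' u hu v hv) ?_
  filter_upwards [Ioc_mem_nhdsGT_of_mem (by simp : (0:ℝ) ∈ Ico (0:ℝ) 1)] with t ht
  have h := hconv.2 hu hv (by linarith [ht.2] : (0:ℝ) ≤ 1 - t) ht.1.le (by ring)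
  rw [path_eq u v (by ring : (1 - t) + t = 1)] at h
  rw [div_le_iff₀ ht.1]
  simp only [smul_eq_mul] at h
  nlinarith [h]

private lemma grad_lt
    (hf' : ∀ u ∈ D, ∀ v ∈ D,
      Tendsto (fun t : ℝ => (f (u + t • (v - u)) - f u) / t) (𝓝[>] 0)
        (𝓝 (f' u (v - u))))
    (hconv : StrictConvexOn ℝ D f) {u v : X} (hu : u ∈ D) (hv : v ∈ D) (hne : u ≠ v) :
    f' u (v - u) < f v - f u := by
  set m := u + (1/2 : ℝ) • (v - u) with hm
  have hmD : m ∈ D := path_mem hconv.1 hu hv (by norm_num)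
  have h1 : f' u (m - u) ≤ f m - f u := grad_le hf' hconv.convexOn hu hmD
  rw [show m - u = (1/2 : ℝ) • (v - u) by rw [hm]; module, map_smul, smul_eq_mul] at h1
  have h2 := hconv.2 hu hv hne (by norm_num : (0:ℝ) < 1/2) (by norm_num : (0:ℝ) < 1/2)
    (by norm_num : (1/2 : ℝ) + 1/2 = 1)
  rw [path_eq u v (by norm_num : (1/2 : ℝ) + 1/2 = 1)] at h2
  rw [← hm] at h2
  simp only [smul_eq_mul] at h2
  linarith

end aux

open Filter Topology

/-- A relatively Gâteaux differentiable function on a convex set is (strictly)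
convex iff its Gâteaux derivative is (strictly) monotone. -/
theorem gateaux_convexity_monotone_characterization
    {X : Type*} [AddCommGroup X] [Module ℝ X] [TopologicalSpace X]
    [IsTopologicalAddGroup X] [ContinuousSMul ℝ X]
    (D : Set X) (hDconv : Convex ℝ D)
    (f : X → ℝ) (f' : X → X →L[ℝ] ℝ)
    (hf' : ∀ u ∈ D, ∀ v ∈ D,
      Tendsto (fun t : ℝ => (f (u + t • (v - u)) - f u) / t) (𝓝[>] 0)
        (𝓝 (f' u (v - u)))) :
    (ConvexOn ℝ D f ↔ ∀ u ∈ D, ∀ v ∈ D, 0 ≤ (f' u - f' v) (u - v)) ∧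
    (StrictConvexOn ℝ D f ↔ ∀ u ∈ D, ∀ v ∈ D, u ≠ v → 0 < (f' u - f' v) (u - v)) := by
  constructor
  · constructor
    · intro hc u hu v hv
      have h1 := grad_le hf' hc hu hv
      have h2 := grad_le hf' hc hv hu
      rw [ContinuousLinearMap.sub_apply]
      have e1 : f' u (u - v) = -(f' u (v - u)) := by rw [← map_neg, neg_sub]
      rw [e1]
      linarith
    · exact fun h => convexOn_of_mono hDconv hf' h
  · constructor
    · intro hc u hu v hv hne
      have h1 := grad_lt hf' hc hu hv hne
      have h2 := grad_lt hf' hc hv hu (Ne.symm hne)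
      rw [ContinuousLinearMap.sub_apply]
      have e1 : f' u (u - v) = -(f' u (v - u)) := by rw [← map_neg, neg_sub]
      rw [e1]
      linarith
    · exact fun h => strictConvexOn_of_strictMono hDconv hf' h
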